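/- Let p be a prime number and 1 ≤ i ≤ n integers, and for 1 ≤ i' ≤ n let j_n(i') denote the least integer j ≥ 0 such that i'·p^j ≥ n (equivalently j_n(i') = ⌈log_p(n/i')⌉). Then the following are equivalent: (a) i'·p^{j_n(i')} ≥ i·p^{j_n(i)} for every integer 1 ≤ i' ≤ i; (b) i = ⌈n/p^k⌉ for some integer k ≥ 0. -/

import Mathlib

/-- Ceiling division of natural numbers: `cdiv a b = ⌈a / b⌉` (for `b > 0`). -/
def cdiv (a b : ℕ) : ℕ := (a + b - 1) / b

/-- `jn p n i` is `j_n(i)`, the least integer `j ≥ 0` such that `i * p ^ j ≥ n`. -/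
noncomputable def jn (p n i : ℕ) : ℕ := sInf {j : ℕ | n ≤ i * p ^ j}

lemma cdiv_le_iff {a b k : ℕ} (hb : 0 < b) : cdiv a b ≤ k ↔ a ≤ k * b := by
  unfold cdiv
  rw [Nat.div_le_iff_le_mul_add_pred hb, mul_comm]
  omega

lemma le_cdiv_mul {a b : ℕ} (hb : 0 < b) : a ≤ cdiv a b * b :=
  (cdiv_le_iff hb).mp le_rfl

lemma jn_spec {p n i : ℕ} (hp : 2 ≤ p) (hi : 1 ≤ i) : n ≤ i * p ^ jn p n i := by
  have hne : ∃ j, n ≤ i * p ^ j := by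
    refine ⟨n, ?_⟩
    calc n ≤ p ^ n := (Nat.lt_pow_self (by omega : 1 < p) : n < p ^ n).le
      _ ≤ i * p ^ n := Nat.le_mul_of_pos_left _ hi
  exact Nat.sInf_mem hne

lemma jn_le {p n i j : ℕ} (h : n ≤ i * p ^ j) : jn p n i ≤ j :=
  Nat.sInf_le h

lemma jn_anti {p n i i' : ℕ} (hp : 2 ≤ p) (hi' : 1 ≤ i') (h : i' ≤ i) :
    jn p n i ≤ jn p n i' := by
  apply jn_le
  calc n ≤ i' * p ^ jn p n i' := jn_spec hp hi'
    _ ≤ i * p ^ jn p n i' := Nat.mul_le_mul_right _ h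

lemma m_mono {p n : ℕ} (hp : 2 ≤ p) :
    Monotone (fun j => cdiv n (p ^ j) * p ^ j) := by
  apply monotone_nat_of_le_succ
  intro j
  have hpj : 0 < p ^ j := pow_pos (by omega) j
  have hpj1 : 0 < p ^ (j + 1) := pow_pos (by omega) _
  have h2 : cdiv n (p ^ j) ≤ cdiv n (p ^ (j + 1)) * p := by
    rw [cdiv_le_iff hpj, mul_assoc, ← pow_succ']
    exact le_cdiv_mul hpj1
  calc cdiv n (p ^ j) * p ^ j ≤ (cdiv n (p ^ (j + 1)) * p) * p ^ j :=
        Nat.mul_le_mul_right _ h2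
    _ = cdiv n (p ^ (j + 1)) * p ^ (j + 1) := by ring

/-- For a prime `p` and `1 ≤ i ≤ n`, the following are equivalent:
(a) `i' * p ^ j_n(i') ≥ i * p ^ j_n(i)` for every `1 ≤ i' ≤ i`;
(b) `i = ⌈n / p ^ k⌉` for some `k ≥ 0`. -/
theorem stmt_2 {p n i : ℕ} (hp : p.Prime) (h1 : 1 ≤ i) (h2 : i ≤ n) :
    (∀ i' : ℕ, 1 ≤ i' → i' ≤ i → i * p ^ jn p n i ≤ i' * p ^ jn p n i') ↔
      ∃ k : ℕ, i = cdiv n (p ^ k) := by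
  have hp2 : 2 ≤ p := hp.two_le
  constructor
  · intro h
    refine ⟨jn p n i, ?_⟩
    set j := jn p n i with hj
    have hspec : n ≤ i * p ^ j := jn_spec hp2 h1
    have hpj : 0 < p ^ j := pow_pos (by omega) j
    set i0 := cdiv n (p ^ j) with hi0
    have hi0le : i0 ≤ i := (cdiv_le_iff hpj).mpr hspec
    have hi01 : 1 ≤ i0 := by
      rcases Nat.eq_zero_or_pos i0 with h0 | h0
      · exfalso
        have hm := le_cdiv_mul (a := n) hpj
        rw [← hi0, h0, zero_mul] at hm
        omega
      · exact h0
    have hji0 : jn p n i0 = j := by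
      have hle : jn p n i0 ≤ j := jn_le (le_cdiv_mul hpj)
      have hge : j ≤ jn p n i0 := jn_anti hp2 hi01 hi0le
      omega
    have := h i0 hi01 hi0le
    rw [hji0] at this
    have : i ≤ i0 := Nat.le_of_mul_le_mul_right this hpj
    omega
  · rintro ⟨k, hk⟩ i' h1' h2'
    set j := jn p n i with hj
    set j' := jn p n i' with hj'
    have hpk : 0 < p ^ k := pow_pos (by omega) k
    have hpj : 0 < p ^ j := pow_pos (by omega) j
    have hjk : j ≤ k := jn_le (by rw [hk]; exact le_cdiv_mul hpk)
    have hjj' : j ≤ j' := jn_anti hp2 h1' h2'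
    -- i = cdiv n (p ^ j)
    have hieq : i = cdiv n (p ^ j) := by
      have hle : cdiv n (p ^ j) ≤ i := (cdiv_le_iff hpj).mpr (jn_spec hp2 h1)
      have hge : i ≤ cdiv n (p ^ j) := by
        rw [hk, cdiv_le_iff hpk]
        calc n ≤ cdiv n (p ^ j) * p ^ j := le_cdiv_mul hpj
          _ ≤ cdiv n (p ^ j) * p ^ k :=
            Nat.mul_le_mul_left _ (Nat.pow_le_pow_right (by omega) hjk)
      omega
    have hpj' : 0 < p ^ j' := pow_pos (by omega) j'
    calc i * p ^ j = cdiv n (p ^ j) * p ^ j := by rw [← hieq]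
      _ ≤ cdiv n (p ^ j') * p ^ j' := m_mono hp2 hjj'
      _ ≤ i' * p ^ j' :=
        Nat.mul_le_mul_right _ ((cdiv_le_iff hpj').mpr (jn_spec hp2 h1'))
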